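/- Let p > 2. There exists a constant C > 0, depending only on p, such that for all real numbers x and y one has | |x+y|^{p-2}(x+y) − |x|^{p-2}x − (p−1)|x|^{p-2}y | ≤ C·( 1_{p>3}·|x|^{p−3}y² + |y|^{p−1} ), where the term 1_{p>3}·|x|^{p−3}y² is present only when p > 3. -/

import Mathlib

open Real Set

-- subadditivity of rpow on reals for exponent in [0,1]
private lemma real_rpow_add_le {u v q : ℝ} (hu : 0 ≤ u) (hv : 0 ≤ v) (hq : 0 ≤ q) (hq1 : q ≤ 1) :
    (u + v) ^ q ≤ u ^ q + v ^ q := by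
  have h := NNReal.rpow_add_le_add_rpow u.toNNReal v.toNNReal hq hq1
  have h2 := NNReal.coe_le_coe.2 h
  push_cast at h2
  rwa [Real.coe_toNNReal _ hu, Real.coe_toNNReal _ hv] at h2

private lemma abs_rpow_sub_rpow_le {a b q : ℝ} (ha : 0 ≤ a) (hb : 0 ≤ b)
    (hq : 0 ≤ q) (hq1 : q ≤ 1) : |a ^ q - b ^ q| ≤ |a - b| ^ q := by
  wlog hab : b ≤ a with H
  · rw [abs_sub_comm, abs_sub_comm a b]; exact H hb ha hq hq1 (le_of_not_ge hab)
  have h1 : a ^ q ≤ (a - b) ^ q + b ^ q := by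
    have := real_rpow_add_le (u := a - b) (v := b) (by linarith) hb hq hq1
    simpa [sub_add_cancel] using this
  have h2 : b ^ q ≤ a ^ q := Real.rpow_le_rpow hb hab hq
  rw [abs_of_nonneg (by linarith), abs_of_nonneg (by linarith)]
  linarith

-- Lipschitz bound for rpow, exponent ≥ 1
private lemma rpow_sub_rpow_le_mul {a b q : ℝ} (ha : 0 ≤ a) (hab : a ≤ b) (hq : 1 ≤ q) :
    b ^ q - a ^ q ≤ q * b ^ (q - 1) * (b - a) := by
  have hb : 0 ≤ b := ha.trans hab
  have hder : ∀ t ∈ Icc a b, HasDerivWithinAt (fun s : ℝ => s ^ q) (q * t ^ (q - 1)) (Icc a b) t :=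
    fun t _ => (Real.hasDerivAt_rpow_const (Or.inr hq)).hasDerivWithinAt
  have hbound : ∀ t ∈ Icc a b, ‖q * t ^ (q - 1)‖ ≤ q * b ^ (q - 1) := by
    intro t ht
    have ht0 : 0 ≤ t := ha.trans ht.1
    rw [Real.norm_eq_abs, abs_of_nonneg (by positivity)]
    exact mul_le_mul_of_nonneg_left (Real.rpow_le_rpow ht0 ht.2 (by linarith)) (by linarith)
  have := (convex_Icc a b).norm_image_sub_le_of_norm_hasDerivWithin_le hder hbound
    (left_mem_Icc.2 hab) (right_mem_Icc.2 hab)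
  have hba : |b - a| = b - a := abs_of_nonneg (by linarith)
  rw [Real.norm_eq_abs, Real.norm_eq_abs, hba] at this
  calc b ^ q - a ^ q ≤ |b ^ q - a ^ q| := le_abs_self _
    _ ≤ q * b ^ (q - 1) * (b - a) := this

private lemma hasDerivAt_absrpow {p : ℝ} (hp : 2 < p) (t : ℝ) :
    HasDerivAt (fun s : ℝ => |s| ^ (p - 2) * s) ((p - 1) * |t| ^ (p - 2)) t := by
  rcases lt_trichotomy t 0 with ht | rfl | ht
  · -- t < 0 : near t, f s = -((-s) ^ (p-1))
    have h2 : HasDerivAt (fun u : ℝ => u ^ (p - 1)) ((p - 1) * (-t) ^ (p - 2)) (-t) := by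
      have := Real.hasDerivAt_rpow_const (x := -t) (p := p - 1) (Or.inl (by linarith))
      have he : p - 1 - 1 = p - 2 := by ring
      rwa [he] at this
    have h3 : HasDerivAt (fun s : ℝ => (-s) ^ (p - 1)) ((p - 1) * (-t) ^ (p - 2) * (-1)) t :=
      HasDerivAt.comp t h2 (hasDerivAt_neg t)
    have h4 : HasDerivAt (fun s : ℝ => -((-s) ^ (p - 1))) ((p - 1) * (-t) ^ (p - 2)) t := by
      have := h3.neg
      exact (by simpa using this : HasDerivAt (-fun s : ℝ => (-s) ^ (p - 1)) ((p - 1) * (-t) ^ (p - 2)) t)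
    rw [abs_of_neg ht]
    apply h4.congr_of_eventuallyEq
    filter_upwards [eventually_lt_nhds ht] with s hs
    have hs0 : (0:ℝ) < -s := by linarith
    rw [abs_of_neg hs]
    have : (-s) ^ (p - 2) * s = -((-s) ^ (p - 2) * (-s)) := by ring
    rw [this, ← Real.rpow_add_one (by linarith : -s ≠ 0), show p - 2 + 1 = p - 1 from by ring]
  · -- t = 0
    have hd : (p - 1) * |(0:ℝ)| ^ (p - 2) = 0 := by
      rw [abs_zero, Real.zero_rpow (by linarith)]; ring
    rw [hd, hasDerivAt_iff_tendsto_slope]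
    have hs : ∀ s : ℝ, s ≠ 0 → slope (fun s : ℝ => |s| ^ (p - 2) * s) 0 s = |s| ^ (p - 2) := by
      intro s hs
      rw [slope_def_field]
      field_simp
      simp
    have hcont : Filter.Tendsto (fun s : ℝ => |s| ^ (p - 2)) (nhdsWithin 0 {(0:ℝ)}ᶜ) (nhds 0) := by
      have h1 : ContinuousAt (fun s : ℝ => |s| ^ (p - 2)) 0 :=
        continuous_abs.continuousAt.rpow_const (Or.inr (by linarith))
      have h0 : |(0:ℝ)| ^ (p - 2) = 0 := by rw [abs_zero, Real.zero_rpow (by linarith)]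
      have := h1.continuousWithinAt (s := {(0:ℝ)}ᶜ)
      rw [ContinuousWithinAt, h0] at this
      exact this
    exact hcont.congr' (by filter_upwards [self_mem_nhdsWithin] with s hs' using (hs s hs').symm)
  · -- t > 0
    have h2 : HasDerivAt (fun u : ℝ => u ^ (p - 1)) ((p - 1) * t ^ (p - 2)) t := by
      have := Real.hasDerivAt_rpow_const (x := t) (p := p - 1) (Or.inl (by linarith))
      have he : p - 1 - 1 = p - 2 := by ring
      rwa [he] at this
    rw [abs_of_pos ht]
    apply h2.congr_of_eventuallyEq
    filter_upwards [eventually_gt_nhds ht] with s hs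
    rw [abs_of_pos hs, ← Real.rpow_add_one (ne_of_gt hs), show p - 2 + 1 = p - 1 from by ring]

private lemma rpow_mul_self {a q : ℝ} (ha : 0 ≤ a) (hq : q + 1 ≠ 0) : a ^ q * a = a ^ (q + 1) := by
  rcases ha.eq_or_lt with rfl | ha'
  · rw [Real.zero_rpow hq]; ring
  · exact (Real.rpow_add_one (ne_of_gt ha') q).symm

private lemma abs_rpow_sub_rpow_le_mul {a b M q : ℝ} (ha : 0 ≤ a) (hb : 0 ≤ b)
    (haM : a ≤ M) (hbM : b ≤ M) (hq : 1 ≤ q) :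
    |a ^ q - b ^ q| ≤ q * M ^ (q - 1) * |a - b| := by
  wlog hab : b ≤ a with H
  · rw [abs_sub_comm, abs_sub_comm a b]; exact H hb ha hbM haM hq (le_of_not_ge hab)
  have h1 := rpow_sub_rpow_le_mul hb hab hq
  have h2 : a ^ (q - 1) ≤ M ^ (q - 1) := Real.rpow_le_rpow ha haM (by linarith)
  have h4 : b ^ q ≤ a ^ q := Real.rpow_le_rpow hb hab (by linarith)
  rw [abs_of_nonneg (by linarith), abs_of_nonneg (by linarith)]
  have h5 : q * a ^ (q - 1) * (a - b) ≤ q * M ^ (q - 1) * (a - b) := by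
    apply mul_le_mul_of_nonneg_right _ (by linarith)
    exact mul_le_mul_of_nonneg_left h2 (by linarith)
  linarith

private lemma mem_uIcc_abs_sub_le {x y t : ℝ} (ht : t ∈ Set.uIcc x (x + y)) : |t - x| ≤ |y| := by
  have h1 := le_abs_self y
  have h2 := neg_abs_le y
  rw [Set.mem_uIcc] at ht
  rw [abs_le]
  rcases ht with ⟨ha, hb⟩ | ⟨ha, hb⟩ <;> constructor <;> linarith

private lemma mvt_bound {p : ℝ} (hp : 2 < p) (x y : ℝ) {C : ℝ}
    (hC : ∀ t ∈ Set.uIcc x (x + y), (p - 1) * |(|t| ^ (p - 2) - |x| ^ (p - 2))| ≤ C) :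
    |(|x + y| ^ (p - 2) * (x + y) - |x| ^ (p - 2) * x - (p - 1) * |x| ^ (p - 2) * y)|
      ≤ C * |y| := by
  set s := Set.uIcc x (x + y) with hsdef
  set f : ℝ → ℝ := fun t => |t| ^ (p - 2) * t - ((p - 1) * |x| ^ (p - 2)) * t with hf
  have hder : ∀ t ∈ s, HasDerivWithinAt f
      ((p - 1) * |t| ^ (p - 2) - (p - 1) * |x| ^ (p - 2)) s t := by
    intro t _
    have h1 := hasDerivAt_absrpow hp t
    have h2 : HasDerivAt (fun t : ℝ => ((p - 1) * |x| ^ (p - 2)) * t)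
        ((p - 1) * |x| ^ (p - 2)) t := by
      simpa using (hasDerivAt_id t).const_mul ((p - 1) * |x| ^ (p - 2))
    exact (h1.sub h2).hasDerivWithinAt
  have hbound : ∀ t ∈ s, ‖(p - 1) * |t| ^ (p - 2) - (p - 1) * |x| ^ (p - 2)‖ ≤ C := by
    intro t ht
    rw [Real.norm_eq_abs, ← mul_sub, abs_mul, abs_of_nonneg (by linarith : (0:ℝ) ≤ p - 1)]
    exact hC t ht
  have key := (convex_uIcc x (x + y)).norm_image_sub_le_of_norm_hasDerivWithin_le hder hbound
    Set.left_mem_uIcc Set.right_mem_uIcc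
  rw [Real.norm_eq_abs, Real.norm_eq_abs] at key
  have h3 : f (x + y) - f x
      = |x + y| ^ (p - 2) * (x + y) - |x| ^ (p - 2) * x - (p - 1) * |x| ^ (p - 2) * y := by
    simp only [hf]; ring
  rw [h3] at key
  simpa [add_sub_cancel_left] using key

/-- First elementary inequality of Lemma 2.1: for `p > 2` there is a constant
`C > 0` depending only on `p` such that for all real `x, y`,
`| |x+y|^(p-2) (x+y) - |x|^(p-2) x - (p-1) |x|^(p-2) y |
  ≤ C (1_{p>3} |x|^(p-3) y² + |y|^(p-1))`. -/
theorem stmt_0 (p : ℝ) (hp : 2 < p) :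
    ∃ C : ℝ, 0 < C ∧ ∀ x y : ℝ,
      |(|x + y| ^ (p - 2) * (x + y) - |x| ^ (p - 2) * x - (p - 1) * |x| ^ (p - 2) * y)|
        ≤ C * ((if 3 < p then |x| ^ (p - 3) * y ^ 2 else 0) + |y| ^ (p - 1)) := by
  have hp1 : (0:ℝ) < p - 1 := by linarith
  have hp2 : (0:ℝ) < p - 2 := by linarith
  by_cases h3 : 3 < p
  · -- case p > 3
    set A : ℝ := (3:ℝ) ^ (p - 1) + (2:ℝ) ^ (p - 1) + (p - 1) * (2:ℝ) ^ (p - 2) with hAdef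
    set B : ℝ := (p - 1) * (p - 2) * ((3:ℝ)/2) ^ (p - 3) with hBdef
    have h3p : (0:ℝ) < (3:ℝ) ^ (p - 1) := Real.rpow_pos_of_pos (by norm_num) _
    have h2p : (0:ℝ) < (2:ℝ) ^ (p - 1) := Real.rpow_pos_of_pos (by norm_num) _
    have h2p2 : (0:ℝ) < (2:ℝ) ^ (p - 2) := Real.rpow_pos_of_pos (by norm_num) _
    have h32 : (0:ℝ) < ((3:ℝ)/2) ^ (p - 3) := Real.rpow_pos_of_pos (by norm_num) _
    have hA : 0 < A := by have := mul_pos hp1 h2p2; rw [hAdef]; linarith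
    have hB : 0 < B := mul_pos (mul_pos hp1 hp2) h32
    refine ⟨A + B, by linarith, fun x y => ?_⟩
    rw [if_pos h3]
    have hT : 0 ≤ |x| ^ (p - 3) * y ^ 2 := by positivity
    have hR : 0 ≤ |y| ^ (p - 1) := Real.rpow_nonneg (abs_nonneg _) _
    rcases le_or_gt |x| (2 * |y|) with hxy | hxy
    · -- triangle inequality regime
      have e1 : |(|x + y| ^ (p - 2) * (x + y))| = |x + y| ^ (p - 1) := by
        rw [abs_mul, abs_of_nonneg (Real.rpow_nonneg (abs_nonneg _) _),
          rpow_mul_self (abs_nonneg _) (by linarith : (p-2) + 1 ≠ 0),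
          show p - 2 + 1 = p - 1 from by ring]
      have e2 : |(|x| ^ (p - 2) * x)| = |x| ^ (p - 1) := by
        rw [abs_mul, abs_of_nonneg (Real.rpow_nonneg (abs_nonneg _) _),
          rpow_mul_self (abs_nonneg _) (by linarith), show p - 2 + 1 = p - 1 from by ring]
      have e3 : |((p - 1) * |x| ^ (p - 2) * y)| = (p - 1) * |x| ^ (p - 2) * |y| := by
        rw [abs_mul, abs_mul, abs_of_nonneg hp1.le,
          abs_of_nonneg (Real.rpow_nonneg (abs_nonneg _) _)]
      have tri : |(|x + y| ^ (p - 2) * (x + y) - |x| ^ (p - 2) * x - (p - 1) * |x| ^ (p - 2) * y)|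
          ≤ |x + y| ^ (p - 1) + |x| ^ (p - 1) + (p - 1) * |x| ^ (p - 2) * |y| := by
        calc _ ≤ |(|x + y| ^ (p - 2) * (x + y) - |x| ^ (p - 2) * x)|
                  + |((p - 1) * |x| ^ (p - 2) * y)| := abs_sub _ _
          _ ≤ |(|x + y| ^ (p - 2) * (x + y))| + |(|x| ^ (p - 2) * x)|
                  + |((p - 1) * |x| ^ (p - 2) * y)| := by
              have := abs_sub (|x + y| ^ (p - 2) * (x + y)) (|x| ^ (p - 2) * x)
              linarith
          _ = _ := by rw [e1, e2, e3]
      have b1 : |x + y| ^ (p - 1) ≤ (3:ℝ) ^ (p - 1) * |y| ^ (p - 1) := by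
        rw [← Real.mul_rpow (by norm_num) (abs_nonneg _)]
        apply Real.rpow_le_rpow (abs_nonneg _) _ (by linarith)
        calc |x + y| ≤ |x| + |y| := abs_add_le _ _
          _ ≤ 3 * |y| := by linarith
      have b2 : |x| ^ (p - 1) ≤ (2:ℝ) ^ (p - 1) * |y| ^ (p - 1) := by
        rw [← Real.mul_rpow (by norm_num) (abs_nonneg _)]
        exact Real.rpow_le_rpow (abs_nonneg _) hxy (by linarith)
      have b3 : (p - 1) * |x| ^ (p - 2) * |y| ≤ (p - 1) * (2:ℝ) ^ (p - 2) * |y| ^ (p - 1) := by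
        have h1 : |x| ^ (p - 2) ≤ (2:ℝ) ^ (p - 2) * |y| ^ (p - 2) := by
          rw [← Real.mul_rpow (by norm_num) (abs_nonneg _)]
          exact Real.rpow_le_rpow (abs_nonneg _) hxy (by linarith)
        have h2 : (p - 1) * |x| ^ (p - 2) * |y| ≤ (p - 1) * ((2:ℝ) ^ (p - 2) * |y| ^ (p - 2)) * |y| := by
          apply mul_le_mul_of_nonneg_right _ (abs_nonneg _)
          exact mul_le_mul_of_nonneg_left h1 hp1.le
        calc (p - 1) * |x| ^ (p - 2) * |y| ≤ (p - 1) * ((2:ℝ) ^ (p - 2) * |y| ^ (p - 2)) * |y| := h2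
          _ = (p - 1) * (2:ℝ) ^ (p - 2) * (|y| ^ (p - 2) * |y|) := by ring
          _ = (p - 1) * (2:ℝ) ^ (p - 2) * |y| ^ (p - 1) := by
              rw [rpow_mul_self (abs_nonneg _) (by linarith), show p - 2 + 1 = p - 1 from by ring]
      have hBR : 0 ≤ B * |y| ^ (p - 1) := mul_nonneg hB.le hR
      have hABT : 0 ≤ (A + B) * (|x| ^ (p - 3) * y ^ 2) := mul_nonneg (by linarith) hT
      calc _ ≤ |x + y| ^ (p - 1) + |x| ^ (p - 1) + (p - 1) * |x| ^ (p - 2) * |y| := tri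
        _ ≤ A * |y| ^ (p - 1) := by
            have hAe : (3:ℝ) ^ (p - 1) * |y| ^ (p - 1) + (2:ℝ) ^ (p - 1) * |y| ^ (p - 1)
                + (p - 1) * (2:ℝ) ^ (p - 2) * |y| ^ (p - 1) = A * |y| ^ (p - 1) := by
              rw [hAdef]; ring
            linarith
        _ ≤ (A + B) * (|x| ^ (p - 3) * y ^ 2 + |y| ^ (p - 1)) := by
            nlinarith [mul_nonneg hA.le hT, mul_nonneg hB.le hT, mul_nonneg hB.le hR]
    · -- Taylor regime : 2|y| < |x|
      have hx0 : 0 < |x| := by have := abs_nonneg y; linarith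
      have key : |(|x + y| ^ (p - 2) * (x + y) - |x| ^ (p - 2) * x - (p - 1) * |x| ^ (p - 2) * y)|
          ≤ (B * |x| ^ (p - 3) * |y|) * |y| := by
        apply mvt_bound hp
        intro t ht
        have hty := mem_uIcc_abs_sub_le ht
        have htx : |(|t| - |x|)| ≤ |y| := (abs_abs_sub_abs_le_abs_sub t x).trans hty
        have htM : |t| ≤ (3/2) * |x| := by
          have h1 := abs_le.1 htx
          linarith [h1.2]
        have hxM : |x| ≤ (3/2) * |x| := by linarith
        have hkey := abs_rpow_sub_rpow_le_mul (abs_nonneg t) (abs_nonneg x) htM hxM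
          (by linarith : (1:ℝ) ≤ p - 2)
        have hM : ((3/2) * |x|) ^ (p - 2 - 1) = ((3:ℝ)/2) ^ (p - 3) * |x| ^ (p - 3) := by
          rw [Real.mul_rpow (by norm_num) (abs_nonneg _), show p - 2 - 1 = p - 3 from by ring]
        rw [hM] at hkey
        calc (p - 1) * |(|t| ^ (p - 2) - |x| ^ (p - 2))|
            ≤ (p - 1) * ((p - 2) * (((3:ℝ)/2) ^ (p - 3) * |x| ^ (p - 3)) * |(|t| - |x|)|) := by
              apply mul_le_mul_of_nonneg_left hkey hp1.le
          _ ≤ (p - 1) * ((p - 2) * (((3:ℝ)/2) ^ (p - 3) * |x| ^ (p - 3)) * |y|) := by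
              apply mul_le_mul_of_nonneg_left _ hp1.le
              apply mul_le_mul_of_nonneg_left htx
              positivity
          _ = B * |x| ^ (p - 3) * |y| := by rw [hBdef]; ring
      have e : (B * |x| ^ (p - 3) * |y|) * |y| = B * (|x| ^ (p - 3) * y ^ 2) := by
        have : |y| * |y| = y ^ 2 := by rw [abs_mul_abs_self]; ring
        calc (B * |x| ^ (p - 3) * |y|) * |y| = B * |x| ^ (p - 3) * (|y| * |y|) := by ring
          _ = B * (|x| ^ (p - 3) * y ^ 2) := by rw [this]; ring
      rw [e] at key
      have hAT : 0 ≤ A * (|x| ^ (p - 3) * y ^ 2) := mul_nonneg hA.le hT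
      have hABR : 0 ≤ (A + B) * |y| ^ (p - 1) := mul_nonneg (by linarith) hR
      calc _ ≤ B * (|x| ^ (p - 3) * y ^ 2) := key
        _ ≤ (A + B) * (|x| ^ (p - 3) * y ^ 2 + |y| ^ (p - 1)) := by
            nlinarith [mul_nonneg hA.le hT, mul_nonneg hA.le hR, mul_nonneg hB.le hR]
  · -- case 2 < p ≤ 3
    refine ⟨p - 1, hp1, fun x y => ?_⟩
    rw [if_neg h3, zero_add]
    have key : |(|x + y| ^ (p - 2) * (x + y) - |x| ^ (p - 2) * x - (p - 1) * |x| ^ (p - 2) * y)|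
        ≤ ((p - 1) * |y| ^ (p - 2)) * |y| := by
      apply mvt_bound hp
      intro t ht
      have hty := mem_uIcc_abs_sub_le ht
      have htx : |(|t| - |x|)| ≤ |y| := (abs_abs_sub_abs_le_abs_sub t x).trans hty
      have h1 : |(|t| ^ (p - 2) - |x| ^ (p - 2))| ≤ |(|t| - |x|)| ^ (p - 2) :=
        abs_rpow_sub_rpow_le (abs_nonneg t) (abs_nonneg x) hp2.le (by linarith)
      have h2 : |(|t| - |x|)| ^ (p - 2) ≤ |y| ^ (p - 2) :=
        Real.rpow_le_rpow (abs_nonneg _) htx hp2.le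
      apply mul_le_mul_of_nonneg_left _ hp1.le
      linarith
    calc _ ≤ ((p - 1) * |y| ^ (p - 2)) * |y| := key
      _ = (p - 1) * |y| ^ (p - 1) := by
          rw [mul_assoc, rpow_mul_self (abs_nonneg _) (by linarith),
            show p - 2 + 1 = p - 1 from by ring]
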